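/- Let m₁, m₂ ∈ ℚ with m₁ − m₂ = P/Q, gcd(P,Q) = 1, Q ≥ 2, and assume k₀ := 6(m₁ + m₂) − 1 is an integer; set k₁ := (36(m₁ − m₂)² − 1)/144 ∈ ℚ. Then for each i ∈ {1,2} there exists a unique formal power series g_i ∈ ℚ[[q]] with constant coefficient 1 satisfying L_{m_i}(g_i) = 0. (Consequently the differential equation D_{k₀+2}∘D_{k₀}f = k₁E₄f has the two linearly independent solutions f_i = q^{m_i}·g_i with rational q-expansions.) -/

import Mathlib

/-- The theta operator `θ(f) = q·(df/dq)` on formal power series over `ℚ`. -/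
noncomputable def theta (f : PowerSeries ℚ) : PowerSeries ℚ :=
  PowerSeries.mk fun n => (n : ℚ) * PowerSeries.coeff n f

/-- The weight `2` Eisenstein series `E₂ = 1 − 24·∑_{n≥1} σ₁(n)·qⁿ` as a formal power series. -/
noncomputable def E2 : PowerSeries ℚ :=
  PowerSeries.mk fun n => if n = 0 then 1 else -24 * ∑ d ∈ n.divisors, (d : ℚ)

/-- The weight `4` Eisenstein series `E₄ = 1 + 240·∑_{n≥1} σ₃(n)·qⁿ` as a formal power series. -/
noncomputable def E4 : PowerSeries ℚ :=
  PowerSeries.mk fun n => if n = 0 then 1 else 240 * ∑ d ∈ n.divisors, (d : ℚ) ^ 3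

/-- The operator `A(g) = θ(g) + m·g − (k₀/12)·E₂·g`, the conjugate of `D_{k₀}` under the
substitution `f = q^m·g`. -/
noncomputable def Aop (m : ℚ) (k₀ : ℤ) (g : PowerSeries ℚ) : PowerSeries ℚ :=
  theta g + PowerSeries.C m * g - PowerSeries.C ((k₀ : ℚ) / 12) * (E2 * g)

/-- The operator `L_m(g) = θ(A(g)) + m·A(g) − ((k₀+2)/12)·E₂·A(g) − k₁·E₄·g`, the conjugate
of `D_{k₀+2}∘D_{k₀} − k₁·E₄` under the substitution `f = q^m·g`. -/
noncomputable def Lop (m : ℚ) (k₀ : ℤ) (k₁ : ℚ) (g : PowerSeries ℚ) : PowerSeries ℚ :=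
  theta (Aop m k₀ g) + PowerSeries.C m * Aop m k₀ g
    - PowerSeries.C (((k₀ : ℚ) + 2) / 12) * (E2 * Aop m k₀ g)
    - PowerSeries.C k₁ * (E4 * g)

/-! ### Auxiliary machinery: triangular operators on power series -/

/-- If `g` vanishes below degree `n`, then the `n`-th coefficient of `f * g` is
`f₀ · gₙ`. -/
lemma coeff_mul_of_lowvanish (f g : PowerSeries ℚ) (n : ℕ)
    (h : ∀ j < n, PowerSeries.coeff j g = 0) :
    PowerSeries.coeff n (f * g) = PowerSeries.constantCoeff f * PowerSeries.coeff n g := by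
  rw [PowerSeries.coeff_mul, Finset.sum_eq_single (0, n)]
  · simp
  · rintro ⟨i, j⟩ hmem hne
    rw [Finset.HasAntidiagonal.mem_antidiagonal] at hmem
    have hj : j < n := by
      rcases Nat.eq_zero_or_pos i with hi | hi
      · exfalso; apply hne; subst hi; simp at hmem; simp [hmem]
      · omega
    simp [h j hj]
  · intro hmem
    exact absurd (Finset.HasAntidiagonal.mem_antidiagonal.mpr (by simp)) hmem

/-- The coefficients of the recursively constructed solution of `T g = 0`, `g₀ = 1`,
for a triangular operator `T` with diagonal `c`. -/
noncomputable def sol (T : PowerSeries ℚ → PowerSeries ℚ) (c : ℕ → ℚ) : ℕ → ℚ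
  | n =>
    if n = 0 then 1
    else -(c n)⁻¹ *
      PowerSeries.coeff n (T (PowerSeries.mk fun j => if _ : j < n then sol T c j else 0))
  termination_by n => n

lemma sol_zero (T : PowerSeries ℚ → PowerSeries ℚ) (c : ℕ → ℚ) : sol T c 0 = 1 := by
  rw [sol]; simp

lemma sol_pos (T : PowerSeries ℚ → PowerSeries ℚ) (c : ℕ → ℚ) (n : ℕ) (hn : n ≠ 0) :
    sol T c n = -(c n)⁻¹ *
      PowerSeries.coeff n (T (PowerSeries.mk fun j => if j < n then sol T c j else 0)) := by
  rw [sol]; simp [hn]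

/-- Existence and uniqueness of a normalized solution of `T g = 0` for a "triangular"
operator `T` whose diagonal `c` vanishes at `0` and is nonzero in positive degrees. -/
lemma existsUnique_sol (T : PowerSeries ℚ → PowerSeries ℚ) (c : ℕ → ℚ)
    (hsub : ∀ g h, T (g - h) = T g - T h)
    (hdiag : ∀ g n, (∀ j < n, PowerSeries.coeff j g = 0) →
      PowerSeries.coeff n (T g) = c n * PowerSeries.coeff n g)
    (hc0 : c 0 = 0) (hc : ∀ n : ℕ, n ≠ 0 → c n ≠ 0) :
    ∃! g : PowerSeries ℚ, PowerSeries.constantCoeff g = 1 ∧ T g = 0 := by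
  have T0 : T 0 = 0 := by have := hsub 0 0; simpa using this
  have key : ∀ (g : PowerSeries ℚ) (n : ℕ),
      PowerSeries.coeff n (T g) = c n * PowerSeries.coeff n g +
        PowerSeries.coeff n (T (PowerSeries.mk fun j =>
          if j < n then PowerSeries.coeff j g else 0)) := by
    intro g n
    set t : PowerSeries ℚ := PowerSeries.mk fun j =>
      if j < n then PowerSeries.coeff j g else 0 with ht
    have hvan : ∀ j < n, PowerSeries.coeff j (g - t) = 0 := by
      intro j hj; simp [ht, hj]
    have h1 := hdiag (g - t) n hvan
    rw [hsub] at h1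
    have h2 : PowerSeries.coeff n (g - t) = PowerSeries.coeff n g := by simp [ht]
    rw [h2] at h1
    simp only [map_sub] at h1
    linarith
  have hTg : T (PowerSeries.mk (sol T c)) = 0 := by
    ext n
    rw [map_zero]
    have hk := key (PowerSeries.mk (sol T c)) n
    simp only [PowerSeries.coeff_mk] at hk
    rcases eq_or_ne n 0 with hn | hn
    · subst hn
      have ht0 : (PowerSeries.mk fun j => if j < 0 then sol T c j else 0)
          = (0 : PowerSeries ℚ) := by ext j; simp
      rw [ht0, T0] at hk
      simpa [hc0] using hk
    · rw [hk, sol_pos T c n hn]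
      have := hc n hn
      field_simp
      ring
  refine ⟨PowerSeries.mk (sol T c), ⟨by simpa using sol_zero T c, hTg⟩, ?_⟩
  rintro y ⟨hy1, hy2⟩
  have hall : ∀ n : ℕ, PowerSeries.coeff n (y - PowerSeries.mk (sol T c)) = 0 := by
    intro n
    induction n using Nat.strong_induction_on with
    | _ n ih =>
      rcases eq_or_ne n 0 with hn | hn
      · subst hn
        simp [PowerSeries.coeff_zero_eq_constantCoeff, hy1, sol_zero]
      · have h1 := hdiag (y - PowerSeries.mk (sol T c)) n ih
        rw [hsub, hy2, hTg, sub_zero, map_zero] at h1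
        exact (mul_eq_zero.mp h1.symm).resolve_left (hc n hn)
  ext n
  have := hall n
  rw [map_sub, sub_eq_zero] at this
  exact this

/-! ### Triangularity of `Lop` -/

lemma coeff_theta (f : PowerSeries ℚ) (n : ℕ) :
    PowerSeries.coeff n (theta f) = (n : ℚ) * PowerSeries.coeff n f := by
  simp [theta]

lemma constantCoeff_E2 : PowerSeries.constantCoeff E2 = 1 := by
  simp [E2, ← PowerSeries.coeff_zero_eq_constantCoeff]

lemma constantCoeff_E4 : PowerSeries.constantCoeff E4 = 1 := by
  simp [E4, ← PowerSeries.coeff_zero_eq_constantCoeff]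

lemma coeff_Aop_of_lowvanish (m : ℚ) (k₀ : ℤ) (g : PowerSeries ℚ) (n : ℕ)
    (h : ∀ j < n, PowerSeries.coeff j g = 0) :
    ∀ j ≤ n, PowerSeries.coeff j (Aop m k₀ g)
      = ((j : ℚ) + m - (k₀ : ℚ) / 12) * PowerSeries.coeff j g := by
  intro j hj
  have hE2 : PowerSeries.coeff j (E2 * g) = PowerSeries.coeff j g := by
    rw [coeff_mul_of_lowvanish E2 g j (fun i hi => h i (lt_of_lt_of_le hi hj)),
      constantCoeff_E2, one_mul]
  simp only [Aop, map_sub, map_add, coeff_theta, PowerSeries.coeff_C_mul, hE2]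
  ring

lemma coeff_Lop_of_lowvanish (m : ℚ) (k₀ : ℤ) (k₁ : ℚ) (g : PowerSeries ℚ) (n : ℕ)
    (h : ∀ j < n, PowerSeries.coeff j g = 0) :
    PowerSeries.coeff n (Lop m k₀ k₁ g)
      = (((n : ℚ) + m - ((k₀ : ℚ) + 2) / 12) * ((n : ℚ) + m - (k₀ : ℚ) / 12) - k₁)
          * PowerSeries.coeff n g := by
  have hA := coeff_Aop_of_lowvanish m k₀ g n h
  have hAvan : ∀ j < n, PowerSeries.coeff j (Aop m k₀ g) = 0 := by
    intro j hj
    rw [hA j (le_of_lt hj), h j hj, mul_zero]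
  have hE2A : PowerSeries.coeff n (E2 * Aop m k₀ g)
      = PowerSeries.coeff n (Aop m k₀ g) := by
    rw [coeff_mul_of_lowvanish _ _ n hAvan, constantCoeff_E2, one_mul]
  have hE4g : PowerSeries.coeff n (E4 * g) = PowerSeries.coeff n g := by
    rw [coeff_mul_of_lowvanish _ _ n h, constantCoeff_E4, one_mul]
  simp only [Lop, map_sub, map_add, coeff_theta, PowerSeries.coeff_C_mul, hE2A, hE4g,
    hA n le_rfl]
  ring

lemma theta_sub (a b : PowerSeries ℚ) : theta (a - b) = theta a - theta b := by
  ext n; simp [theta]; ring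

lemma Aop_sub (m : ℚ) (k₀ : ℤ) (a b : PowerSeries ℚ) :
    Aop m k₀ (a - b) = Aop m k₀ a - Aop m k₀ b := by
  simp only [Aop, theta_sub, mul_sub]; ring

lemma Lop_sub (m : ℚ) (k₀ : ℤ) (k₁ : ℚ) (a b : PowerSeries ℚ) :
    Lop m k₀ k₁ (a - b) = Lop m k₀ k₁ a - Lop m k₀ k₁ b := by
  simp only [Lop, Aop_sub, theta_sub, mul_sub]; ring

/-- A fraction `P/Q` in lowest terms with `Q ≥ 2` is not an integer. -/
lemma div_ne_int (P Q : ℤ) (hPQ : Int.gcd P Q = 1) (hQ : 2 ≤ Q) (a : ℤ)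
    (h : (P : ℚ) / (Q : ℚ) = (a : ℚ)) : False := by
  have hQ0 : (Q : ℚ) ≠ 0 := Int.cast_ne_zero.mpr (by omega)
  have hP : (P : ℚ) = (a : ℚ) * (Q : ℚ) := by
    field_simp at h; linarith
  have hPZ : P = a * Q := by exact_mod_cast hP
  have hdvd : Q ∣ P := ⟨a, by linarith⟩
  have h2 : Q.natAbs ∣ Int.gcd P Q :=
    Nat.dvd_gcd (Int.natAbs_dvd_natAbs.mpr hdvd) dvd_rfl
  rw [hPQ] at h2
  have := Nat.le_of_dvd one_pos h2
  omega

/-- With `m₁ − m₂ = P/Q`, `gcd(P,Q) = 1`, `Q ≥ 2`, `k₀ = 6(m₁+m₂) − 1 ∈ ℤ` and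
`k₁ = (36(m₁−m₂)² − 1)/144`, for each `i ∈ {1,2}` there is a unique formal power series
`g_i ∈ ℚ[[q]]` with constant coefficient `1` satisfying `L_{m_i}(g_i) = 0`; consequently
`D_{k₀+2}∘D_{k₀}f = k₁·E₄·f` has the two linearly independent solutions `f_i = q^{m_i}·g_i`
with rational `q`-expansions. -/
theorem existsUnique_solutions (m₁ m₂ : ℚ) (P Q : ℤ) (hPQ : Int.gcd P Q = 1) (hQ : 2 ≤ Q)
    (hm : m₁ - m₂ = (P : ℚ) / (Q : ℚ))
    (k₀ : ℤ) (hk₀ : (k₀ : ℚ) = 6 * (m₁ + m₂) - 1)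
    (k₁ : ℚ) (hk₁ : k₁ = (36 * (m₁ - m₂) ^ 2 - 1) / 144) :
    (∃! g : PowerSeries ℚ, PowerSeries.constantCoeff g = 1 ∧ Lop m₁ k₀ k₁ g = 0) ∧
    (∃! g : PowerSeries ℚ, PowerSeries.constantCoeff g = 1 ∧ Lop m₂ k₀ k₁ g = 0) := by
  constructor
  · refine existsUnique_sol (Lop m₁ k₀ k₁)
      (fun n => (n : ℚ) * ((n : ℚ) + (m₁ - m₂))) (Lop_sub m₁ k₀ k₁) ?_ (by simp) ?_
    · intro g n h
      rw [coeff_Lop_of_lowvanish m₁ k₀ k₁ g n h]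
      congr 1
      rw [hk₀, hk₁]
      ring
    · intro n hn
      apply mul_ne_zero (Nat.cast_ne_zero.mpr hn)
      intro h0
      apply div_ne_int P Q hPQ hQ (-(n : ℤ))
      rw [← hm]
      push_cast
      linarith
  · refine existsUnique_sol (Lop m₂ k₀ k₁)
      (fun n => (n : ℚ) * ((n : ℚ) - (m₁ - m₂))) (Lop_sub m₂ k₀ k₁) ?_ (by simp) ?_
    · intro g n h
      rw [coeff_Lop_of_lowvanish m₂ k₀ k₁ g n h]
      congr 1
      rw [hk₀, hk₁]
      ring
    · intro n hn
      apply mul_ne_zero (Nat.cast_ne_zero.mpr hn)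
      intro h0
      apply div_ne_int P Q hPQ hQ ((n : ℤ))
      rw [← hm]
      push_cast
      linarith
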